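/- arXiv:1112.3187 — 4 statements merged into one kernel-verified Lean document; each statement's English description precedes it below -/
import Mathlib

section
/- Let $(\Omega,\mathcal{F},\mathbb{P})$ be a probability space, $\mathcal{G}$ a sub-$\sigma$-algebra, and $y$ a nonnegative integrable random variable. Then $\operatorname{ess\,sup}\,\mathbb{E}[y\mid\mathcal{G}] = \sup\{\mathbb{E}[y\,b] : b\in L_\infty(\mathcal{G}),\ b\ge 0,\ \mathbb{E}[b]\le 1\}$. -/
open MeasureTheory
open scoped ENNReal

private lemma aux_ind_int {Ω : Type*} {_mΩ : MeasurableSpace Ω} (μ : Measure Ω)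
    {A : Set Ω} (hA : MeasurableSet A) (c : ℝ) :
    ∫ ω, A.indicator (fun _ => c) ω ∂μ = (μ A).toReal * c := by
  rw [integral_indicator_const c hA, smul_eq_mul]; rfl

private lemma aux_mul_ind_int {Ω : Type*} {_mΩ : MeasurableSpace Ω} (μ : Measure Ω)
    {A : Set Ω} (hA : MeasurableSet A) (c : ℝ) (y : Ω → ℝ) :
    ∫ ω, y ω * A.indicator (fun _ => c) ω ∂μ = c * ∫ ω in A, y ω ∂μ := by
  have h : (fun ω => y ω * A.indicator (fun _ => c) ω)
      = A.indicator (fun ω => c * y ω) := by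
    funext ω; by_cases hω : ω ∈ A <;> simp [Set.indicator_apply, hω, mul_comm]
  rw [h, integral_indicator hA, integral_const_mul]

private lemma aux_const_le_setIntegral {Ω : Type*} {_mΩ : MeasurableSpace Ω} (μ : Measure Ω)
    {A : Set Ω} (hA : MeasurableSet A) (hAfin : μ A ≠ ⊤) {t : ℝ} {g : Ω → ℝ}
    (hg : Integrable g μ) (h : ∀ x ∈ A, t ≤ g x) :
    t * (μ A).toReal ≤ ∫ x in A, g x ∂μ :=
  setIntegral_ge_of_const_le_real hA hAfin h hg.integrableOn

/-- Duality: `esssup E[y | G] = sup { E[y b] : b ∈ L∞(G), b ≥ 0, E[b] ≤ 1 }` for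
nonnegative integrable `y` on a probability space. -/
theorem stmt5 {Ω : Type*} {m0 : MeasurableSpace Ω} (μ : Measure Ω) [IsProbabilityMeasure μ]
    (m : MeasurableSpace Ω) (hm : m ≤ m0) (y : Ω → ℝ) (hy : Integrable y μ)
    (hy0 : ∀ ω, 0 ≤ y ω) :
    essSup (fun ω => ENNReal.ofReal ((μ[y|m]) ω)) μ =
      sSup {r : ℝ≥0∞ | ∃ b : Ω → ℝ, Measurable[m] b ∧ (∀ ω, 0 ≤ b ω) ∧
        (∃ C : ℝ, ∀ ω, b ω ≤ C) ∧ (∫ ω, b ω ∂μ) ≤ 1 ∧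
        r = ENNReal.ofReal (∫ ω, y ω * b ω ∂μ)} := by
  haveI : SigmaFinite (μ.trim hm) := by
    have : IsFiniteMeasure (μ.trim hm) := isFiniteMeasure_trim hm
    infer_instance
  set f : Ω → ℝ := μ[y|m] with hf
  have hf_int : Integrable f μ := integrable_condExp
  have hf_sm : StronglyMeasurable[m] f := stronglyMeasurable_condExp
  apply le_antisymm
  · -- essSup ≤ sSup
    refine le_of_forall_lt fun c hc => ?_
    obtain ⟨c', hcc', hc'⟩ := exists_between hc
    have hc'top : c' ≠ ⊤ := (hc'.trans_le le_top).ne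
    set t : ℝ := c'.toReal with ht
    have ht0 : 0 ≤ t := ENNReal.toReal_nonneg
    set A : Set Ω := {ω | t < f ω} with hA
    have hAm : MeasurableSet[m] A := measurableSet_lt (@measurable_const ℝ Ω _ m t)
      hf_sm.measurable
    have hAm0 : MeasurableSet[m0] A := hm A hAm
    have hA0 : μ A ≠ 0 := by
      intro h0
      have hae : ∀ᵐ ω ∂μ, f ω ≤ t := by
        have hnA : ∀ᵐ ω ∂μ, ω ∉ A := by
          rw [ae_iff]
          simpa using h0
        filter_upwards [hnA] with ω hω
        simpa [hA, not_lt] using hω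
      have : essSup (fun ω => ENNReal.ofReal (f ω)) μ ≤ c' := by
        refine essSup_le_of_ae_le c' ?_
        filter_upwards [hae] with ω hω
        calc ENNReal.ofReal (f ω) ≤ ENNReal.ofReal t := ENNReal.ofReal_le_ofReal hω
        _ = c' := ENNReal.ofReal_toReal hc'top
      exact absurd (hc'.trans_le this) (lt_irrefl _)
    have hAfin : μ A ≠ ⊤ := measure_ne_top μ A
    have hApos : 0 < (μ A).toReal := ENNReal.toReal_pos hA0 hAfin
    set b : Ω → ℝ := A.indicator (fun _ => ((μ A).toReal)⁻¹) with hb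
    have hbm : Measurable[m] b := (@measurable_const ℝ Ω _ m _).indicator hAm
    have hb0 : ∀ ω, 0 ≤ b ω := fun ω =>
      Set.indicator_nonneg (fun _ _ => inv_nonneg.2 hApos.le) ω
    have hbC : ∀ ω, b ω ≤ ((μ A).toReal)⁻¹ := fun ω =>
      Set.indicator_le_self' (fun _ _ => inv_nonneg.2 hApos.le) ω
    have hbint : (∫ ω, b ω ∂μ) = 1 := by
      rw [hb, aux_ind_int μ hAm0]
      field_simp
    -- value of the test integral
    have hyA : ∫ ω, y ω * b ω ∂μ = ((μ A).toReal)⁻¹ * ∫ ω in A, y ω ∂μ := by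
      rw [hb, aux_mul_ind_int μ hAm0]
    have hfyA : ∫ ω in A, y ω ∂μ = ∫ ω in A, f ω ∂μ :=
      (setIntegral_condExp hm hy hAm).symm
    have hlow : t ≤ ∫ ω, y ω * b ω ∂μ := by
      rw [hyA, hfyA]
      have h1 : t * (μ A).toReal ≤ ∫ ω in A, f ω ∂μ :=
        aux_const_le_setIntegral μ hAm0 hAfin hf_int (fun x hx => le_of_lt hx)
      rw [inv_mul_eq_div, le_div_iff₀ hApos]
      linarith [h1]
    have hmem : ENNReal.ofReal (∫ ω, y ω * b ω ∂μ) ∈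
        {r : ℝ≥0∞ | ∃ b : Ω → ℝ, Measurable[m] b ∧ (∀ ω, 0 ≤ b ω) ∧
          (∃ C : ℝ, ∀ ω, b ω ≤ C) ∧ (∫ ω, b ω ∂μ) ≤ 1 ∧
          r = ENNReal.ofReal (∫ ω, y ω * b ω ∂μ)} :=
      ⟨b, hbm, hb0, ⟨((μ A).toReal)⁻¹, hbC⟩, hbint.le, rfl⟩
    calc c < c' := hcc'
    _ = ENNReal.ofReal t := (ENNReal.ofReal_toReal hc'top).symm
    _ ≤ ENNReal.ofReal (∫ ω, y ω * b ω ∂μ) := ENNReal.ofReal_le_ofReal hlow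
    _ ≤ _ := le_sSup hmem
  · -- sSup ≤ essSup
    refine sSup_le fun r hr => ?_
    obtain ⟨b, hbm, hb0, ⟨C, hbC⟩, hbint, rfl⟩ := hr
    have hbm0 : Measurable[m0] b := hbm.mono hm le_rfl
    have hb_sm : StronglyMeasurable[m] b := hbm.stronglyMeasurable
    have hbnorm : ∀ᵐ ω ∂μ, ‖b ω‖ ≤ C := by
      refine Filter.Eventually.of_forall fun ω => ?_
      rw [Real.norm_eq_abs, abs_of_nonneg (hb0 ω)]
      exact hbC ω
    have hb_int : Integrable b μ :=
      (integrable_const C).mono' hbm0.aestronglyMeasurable hbnorm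
    have hby_int : Integrable (b * y) μ :=
      hy.bdd_mul hbm0.aestronglyMeasurable hbnorm
    have hpull : μ[b * y|m] =ᵐ[μ] b * f :=
      condExp_stronglyMeasurable_mul_of_bound hm hb_sm hy C hbnorm
    have hkey : ∫ ω, y ω * b ω ∂μ = ∫ ω, b ω * f ω ∂μ := by
      have h1 : ∫ ω, y ω * b ω ∂μ = ∫ ω, (b * y) ω ∂μ := by
        simp [mul_comm]
      have h2 : ∫ ω, (b * y) ω ∂μ = ∫ ω, (μ[b * y|m]) ω ∂μ :=
        (integral_condExp hm).symm
      have h3 : ∫ ω, (μ[b * y|m]) ω ∂μ = ∫ ω, (b * f) ω ∂μ :=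
        integral_congr_ae hpull
      rw [h1, h2, h3]; rfl
    by_cases htop : essSup (fun ω => ENNReal.ofReal (f ω)) μ = ⊤
    · rw [htop]; exact le_top
    set M := essSup (fun ω => ENNReal.ofReal (f ω)) μ with hM
    have hfle : ∀ᵐ ω ∂μ, f ω ≤ M.toReal := by
      filter_upwards [ENNReal.ae_le_essSup (μ := μ) (fun ω => ENNReal.ofReal (f ω))] with ω hω
      by_cases h0 : f ω ≤ 0
      · exact h0.trans ENNReal.toReal_nonneg
      · push_neg at h0
        have := ENNReal.toReal_mono htop hω
        rwa [ENNReal.toReal_ofReal h0.le] at this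
    have hbf_int : Integrable (fun ω => b ω * f ω) μ :=
      hf_int.bdd_mul hbm0.aestronglyMeasurable hbnorm
    have hbound : ∫ ω, b ω * f ω ∂μ ≤ M.toReal := by
      have h1 : ∫ ω, b ω * f ω ∂μ ≤ ∫ ω, b ω * M.toReal ∂μ := by
        refine integral_mono_ae hbf_int (hb_int.mul_const _) ?_
        filter_upwards [hfle] with ω hω
        exact mul_le_mul_of_nonneg_left hω (hb0 ω)
      have h2 : ∫ ω, b ω * M.toReal ∂μ = (∫ ω, b ω ∂μ) * M.toReal :=
        integral_mul_const _ _
      calc ∫ ω, b ω * f ω ∂μ ≤ (∫ ω, b ω ∂μ) * M.toReal := by rw [← h2]; exact h1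
      _ ≤ 1 * M.toReal := mul_le_mul_of_nonneg_right hbint ENNReal.toReal_nonneg
      _ = M.toReal := one_mul _
    calc ENNReal.ofReal (∫ ω, y ω * b ω ∂μ)
        = ENNReal.ofReal (∫ ω, b ω * f ω ∂μ) := by rw [hkey]
    _ ≤ ENNReal.ofReal M.toReal := ENNReal.ofReal_le_ofReal hbound
    _ = M := ENNReal.ofReal_toReal htop
end

section
/- Let $(\Omega,\mathcal{F},\mathbb{P})$ be a probability space, $\mathcal{G}$ a sub-$\sigma$-algebra, $1\le p<\infty$, and $y$ an integrable random variable with $|y|^p$ integrable. Then $(\operatorname{ess\,sup}\,\mathbb{E}[|y|^p\mid\mathcal{G}])^{1/p} = \sup\{\|y\,b\|_p : b\in L_\infty(\mathcal{G}),\ \|b\|_p\le 1\}$. -/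
open MeasureTheory
open scoped ENNReal

private lemma elp_eq {Ω : Type*} {m0 : MeasurableSpace Ω} (μ : Measure Ω) {p : ℝ} (hp0 : 0 < p)
    (u : Ω → ℝ) :
    eLpNorm u (ENNReal.ofReal p) μ = (∫⁻ ω, ENNReal.ofReal (|u ω| ^ p) ∂μ) ^ (1 / p) := by
  rw [eLpNorm_eq_lintegral_rpow_enorm_toReal (by simpa using hp0) ENNReal.ofReal_ne_top,
    ENNReal.toReal_ofReal hp0.le]
  congr 1
  refine lintegral_congr fun ω => ?_
  rw [← ENNReal.ofReal_rpow_of_nonneg (abs_nonneg _) hp0.le, ← Real.norm_eq_abs,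
    ofReal_norm_eq_enorm]

/-- `(esssup E[|y|^p | G])^(1/p) = sup { ‖y b‖_p : b ∈ L∞(G), ‖b‖_p ≤ 1 }`. -/
theorem stmt6 {Ω : Type*} {m0 : MeasurableSpace Ω} (μ : Measure Ω) [IsProbabilityMeasure μ]
    (m : MeasurableSpace Ω) (hm : m ≤ m0) (p : ℝ) (hp : 1 ≤ p) (y : Ω → ℝ)
    (hy : Integrable y μ) (hyp : Integrable (fun ω => abs (y ω) ^ p) μ) :
    (essSup (fun ω => ENNReal.ofReal ((μ[fun ω' => abs (y ω') ^ p|m]) ω)) μ) ^ (1 / p) =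
      sSup {r : ℝ≥0∞ | ∃ b : Ω → ℝ, Measurable[m] b ∧ (∃ C : ℝ, ∀ ω, |b ω| ≤ C) ∧
        eLpNorm b (ENNReal.ofReal p) μ ≤ 1 ∧
        r = eLpNorm (fun ω => y ω * b ω) (ENNReal.ofReal p) μ} := by
  have hp0 : 0 < p := lt_of_lt_of_le one_pos hp
  set f : Ω → ℝ := fun ω => |y ω| ^ p with hf_def
  set g : Ω → ℝ := μ[f|m] with hg_def
  set E : ℝ≥0∞ := essSup (fun ω => ENNReal.ofReal (g ω)) μ with hE_def
  have hf_nonneg : ∀ ω, 0 ≤ f ω := fun ω => Real.rpow_nonneg (abs_nonneg _) p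
  have hg_nonneg : 0 ≤ᵐ[μ] g := condExp_nonneg (ae_of_all _ hf_nonneg)
  have hg_int : Integrable g μ := integrable_condExp
  -- Upper bound for each element of the set
  have step1 : ∀ r ∈ {r : ℝ≥0∞ | ∃ b : Ω → ℝ, Measurable[m] b ∧ (∃ C : ℝ, ∀ ω, |b ω| ≤ C) ∧
      eLpNorm b (ENNReal.ofReal p) μ ≤ 1 ∧
      r = eLpNorm (fun ω => y ω * b ω) (ENNReal.ofReal p) μ}, r ≤ E ^ (1 / p) := by
    rintro r ⟨b, hb_meas, ⟨C, hC⟩, hb1, rfl⟩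
    set h : Ω → ℝ := fun ω => |b ω| ^ p with hh_def
    have hh_nonneg : ∀ ω, 0 ≤ h ω := fun ω => Real.rpow_nonneg (abs_nonneg _) p
    by_cases hEtop : E = ∞
    · rw [hEtop, ENNReal.top_rpow_of_pos (by positivity)]; exact le_top
    have hh_sm : StronglyMeasurable[m] h :=
      ((Real.continuous_rpow_const hp0.le).measurable.comp hb_meas.abs).stronglyMeasurable
    have hh_aesm : AEStronglyMeasurable[m0] h μ :=
      ((hh_sm.mono hm).aestronglyMeasurable)
    have hh_bound : ∀ᵐ ω ∂μ, ‖h ω‖ ≤ C ^ p := by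
      refine ae_of_all _ fun ω => ?_
      rw [Real.norm_eq_abs, abs_of_nonneg (hh_nonneg ω)]
      exact Real.rpow_le_rpow (abs_nonneg _) (hC ω) hp0.le
    have hcond : μ[h * f|m] =ᵐ[μ] h * μ[f|m] :=
      condExp_stronglyMeasurable_mul_of_bound hm hh_sm hyp (C ^ p) hh_bound
    have hhf_int : Integrable (fun ω => h ω * f ω) μ :=
      hyp.bdd_mul hh_aesm (c := C ^ p) (ae_of_all _ fun ω => by
        rw [Real.norm_eq_abs, abs_of_nonneg (hh_nonneg ω)]
        exact Real.rpow_le_rpow (abs_nonneg _) (hC ω) hp0.le)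
    have hhg_int : Integrable (fun ω => h ω * g ω) μ :=
      hg_int.bdd_mul hh_aesm (c := C ^ p) (ae_of_all _ fun ω => by
        rw [Real.norm_eq_abs, abs_of_nonneg (hh_nonneg ω)]
        exact Real.rpow_le_rpow (abs_nonneg _) (hC ω) hp0.le)
    have hint_eq : ∫ ω, h ω * f ω ∂μ = ∫ ω, h ω * g ω ∂μ := by
      rw [← integral_condExp hm (f := fun ω => h ω * f ω)]
      exact integral_congr_ae hcond
    -- lintegral versions
    have hlin_eq : ∫⁻ ω, ENNReal.ofReal (h ω * f ω) ∂μ = ∫⁻ ω, ENNReal.ofReal (h ω * g ω) ∂μ := by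
      rw [← ofReal_integral_eq_lintegral_ofReal hhf_int
          (ae_of_all _ fun ω => mul_nonneg (hh_nonneg ω) (hf_nonneg ω)),
        ← ofReal_integral_eq_lintegral_ofReal hhg_int
          (hg_nonneg.mono fun ω hω => mul_nonneg (hh_nonneg ω) hω),
        hint_eq]
    have key : ∫⁻ ω, ENNReal.ofReal (|y ω * b ω| ^ p) ∂μ ≤ E := by
      have h1 : ∀ ω, ENNReal.ofReal (|y ω * b ω| ^ p) = ENNReal.ofReal (h ω * f ω) := by
        intro ω
        congr 1
        rw [abs_mul, Real.mul_rpow (abs_nonneg _) (abs_nonneg _), mul_comm]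
      calc ∫⁻ ω, ENNReal.ofReal (|y ω * b ω| ^ p) ∂μ
          = ∫⁻ ω, ENNReal.ofReal (h ω * g ω) ∂μ := by
            rw [← hlin_eq]; exact lintegral_congr h1
        _ ≤ ∫⁻ ω, ENNReal.ofReal (h ω) * E ∂μ := by
            refine lintegral_mono_ae ?_
            filter_upwards [ENNReal.ae_le_essSup (fun ω => ENNReal.ofReal (g ω)), hg_nonneg]
              with ω hω hω'
            rw [ENNReal.ofReal_mul (hh_nonneg ω)]
            exact mul_le_mul_right hω _
        _ = (∫⁻ ω, ENNReal.ofReal (h ω) ∂μ) * E := by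
            rw [lintegral_mul_const' E _ hEtop]
        _ ≤ 1 * E := by
            refine mul_le_mul_left ?_ E
            have := elp_eq μ hp0 b
            have hb1' : (∫⁻ ω, ENNReal.ofReal (|b ω| ^ p) ∂μ) ^ (1 / p) ≤ 1 := by
              rw [← this]; exact hb1
            have := ENNReal.rpow_le_rpow hb1' hp0.le
            rwa [← ENNReal.rpow_mul, one_div, inv_mul_cancel₀ hp0.ne', ENNReal.rpow_one,
              ENNReal.one_rpow] at this
        _ = E := one_mul E
    rw [elp_eq μ hp0]
    exact ENNReal.rpow_le_rpow key (by positivity)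
  refine le_antisymm ?_ (sSup_le step1)
  -- Lower bound: E^(1/p) ≤ sSup
  refine le_of_forall_lt_imp_le_of_dense fun M hM => ?_
  have hM_ne_top : M ≠ ∞ := hM.ne_top
  set N : ℝ≥0∞ := M ^ p with hN_def
  have hNE : N < E := by
    have h1 : N < (E ^ (1 / p)) ^ p := ENNReal.rpow_lt_rpow hM hp0
    rwa [← ENNReal.rpow_mul, one_div, inv_mul_cancel₀ hp0.ne', ENNReal.rpow_one] at h1
  set A : Set Ω := {ω | N < ENNReal.ofReal (g ω)} with hA_def
  have hA_m : MeasurableSet[m] A :=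
    (ENNReal.measurable_ofReal.comp stronglyMeasurable_condExp.measurable) measurableSet_Ioi
  have hA_m0 : MeasurableSet[m0] A := hm _ hA_m
  have hA_pos : μ A ≠ 0 := by
    intro h0
    have hae : ∀ᵐ ω ∂μ, ENNReal.ofReal (g ω) ≤ N := by
      rw [ae_iff]
      convert h0 using 2
      ext ω
      simp [hA_def, not_le]
    exact absurd (essSup_le_of_ae_le N hae) (not_le.mpr hNE)
  have hA_fin : μ A ≠ ∞ := measure_ne_top μ A
  have htR_pos : 0 < (μ A).toReal := ENNReal.toReal_pos hA_pos hA_fin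
  set c : ℝ := (μ A).toReal ^ (-(1 / p)) with hc_def
  have hc_pos : 0 < c := Real.rpow_pos_of_pos htR_pos _
  set b : Ω → ℝ := A.indicator fun _ => c with hb_def
  have hb_meas : Measurable[m] b := measurable_const.indicator hA_m
  have hcp : c ^ p = (μ A).toReal⁻¹ := by
    rw [hc_def, ← Real.rpow_mul htR_pos.le]
    rw [show (-(1 / p)) * (p : ℝ) = -1 by field_simp]
    rw [Real.rpow_neg_one]
  have hofcp : ENNReal.ofReal (c ^ p) = (μ A)⁻¹ := by
    rw [hcp, ← ENNReal.toReal_inv, ENNReal.ofReal_toReal (ENNReal.inv_ne_top.mpr hA_pos)]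
  have hb_point : ∀ ω, ENNReal.ofReal (|b ω| ^ p)
      = A.indicator (fun _ => ENNReal.ofReal (c ^ p)) ω := by
    intro ω
    by_cases hω : ω ∈ A
    · simp [hb_def, hω, abs_of_nonneg hc_pos.le]
    · simp [hb_def, hω, Real.zero_rpow hp0.ne']
  have hb_lint : ∫⁻ ω, ENNReal.ofReal (|b ω| ^ p) ∂μ = 1 := by
    rw [lintegral_congr hb_point, lintegral_indicator hA_m0, setLIntegral_const, hofcp,
      ENNReal.inv_mul_cancel hA_pos hA_fin]
  have hb1 : eLpNorm b (ENNReal.ofReal p) μ ≤ 1 := by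
    rw [elp_eq μ hp0, hb_lint, ENNReal.one_rpow]
  have hyb_point : ∀ ω, ENNReal.ofReal (|y ω * b ω| ^ p) =
      A.indicator (fun ω' => (μ A)⁻¹ * ENNReal.ofReal (f ω')) ω := by
    intro ω
    by_cases hω : ω ∈ A
    · rw [Set.indicator_of_mem hω, ← hofcp, ← ENNReal.ofReal_mul (by positivity)]
      congr 1
      rw [hb_def, Set.indicator_of_mem hω, abs_mul, abs_of_nonneg hc_pos.le,
        Real.mul_rpow (abs_nonneg _) hc_pos.le, mul_comm]
    · rw [Set.indicator_of_notMem hω, hb_def, Set.indicator_of_notMem hω]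
      simp [Real.zero_rpow hp0.ne']
  have hsetAf : ∫⁻ ω in A, ENNReal.ofReal (f ω) ∂μ = ∫⁻ ω in A, ENNReal.ofReal (g ω) ∂μ := by
    rw [← ofReal_integral_eq_lintegral_ofReal hyp.restrict
        (ae_restrict_of_ae (ae_of_all _ hf_nonneg)),
      ← ofReal_integral_eq_lintegral_ofReal hg_int.restrict (ae_restrict_of_ae hg_nonneg),
      setIntegral_condExp hm hyp hA_m]
  have hyb_lint : N ≤ ∫⁻ ω, ENNReal.ofReal (|y ω * b ω| ^ p) ∂μ := by
    rw [lintegral_congr hyb_point, lintegral_indicator hA_m0,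
      lintegral_const_mul' _ _ (ENNReal.inv_ne_top.mpr hA_pos), hsetAf]
    have h1 : N * μ A ≤ ∫⁻ ω in A, ENNReal.ofReal (g ω) ∂μ := by
      rw [← setLIntegral_const A N]
      refine lintegral_mono_ae ?_
      filter_upwards [ae_restrict_mem hA_m0] with ω hω
      exact (hω : N < _).le
    calc N = (μ A)⁻¹ * (N * μ A) := by
          rw [mul_comm N (μ A), ← mul_assoc, ENNReal.inv_mul_cancel hA_pos hA_fin, one_mul]
      _ ≤ (μ A)⁻¹ * ∫⁻ ω in A, ENNReal.ofReal (g ω) ∂μ := mul_le_mul_right h1 _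
  have hMle : M ≤ eLpNorm (fun ω => y ω * b ω) (ENNReal.ofReal p) μ := by
    rw [elp_eq μ hp0]
    have h2 := ENNReal.rpow_le_rpow hyb_lint (by positivity : (0:ℝ) ≤ 1 / p)
    rwa [hN_def, ← ENNReal.rpow_mul, mul_one_div_cancel hp0.ne', ENNReal.rpow_one] at h2
  refine hMle.trans (le_sSup ⟨b, hb_meas, ⟨c, fun ω => ?_⟩, hb1, rfl⟩)
  by_cases hω : ω ∈ A
  · simp [hb_def, hω, abs_of_nonneg hc_pos.le]
  · simp [hb_def, hω, hc_pos.le]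
end

section
/- Let $(\Omega,\mathcal{F},\mathbb{P})$ be a probability space, $\mathcal{G}$ a sub-$\sigma$-algebra, $1\le p<\infty$, and $y$ with $|y|^p$ integrable. Then $(\operatorname{ess\,sup}\,\mathbb{E}[|y|^p\mid\mathcal{G}])^{1/p} = \sup\{\mathbb{P}(E)^{-1/p}\|y\,\mathbf{1}_E\|_p : E\in\mathcal{G},\ \mathbb{P}(E)>0\}$. -/
open MeasureTheory
open scoped ENNReal

/-- `(esssup E[|y|^p | G])^(1/p) = sup { P(E)^(-1/p) ‖y 1_E‖_p : E ∈ G, P(E) > 0 }`. -/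
theorem stmt7 {Ω : Type*} {m0 : MeasurableSpace Ω} (μ : Measure Ω) [IsProbabilityMeasure μ]
    (m : MeasurableSpace Ω) (hm : m ≤ m0) (p : ℝ) (hp : 1 ≤ p) (y : Ω → ℝ)
    (hyp : Integrable (fun ω => abs (y ω) ^ p) μ) :
    (essSup (fun ω => ENNReal.ofReal ((μ[fun ω' => abs (y ω') ^ p|m]) ω)) μ) ^ (1 / p) =
      sSup {r : ℝ≥0∞ | ∃ E : Set Ω, MeasurableSet[m] E ∧ 0 < μ E ∧
        r = (μ E) ^ (-(1 / p)) * eLpNorm (E.indicator y) (ENNReal.ofReal p) μ} := by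
  have hp0 : (0:ℝ) < p := lt_of_lt_of_le one_pos hp
  have hp0' : p ≠ 0 := ne_of_gt hp0
  have hpinv : (0:ℝ) ≤ 1 / p := by positivity
  have hpne0 : ENNReal.ofReal p ≠ 0 := ne_of_gt (ENNReal.ofReal_pos.2 hp0)
  have hpnetop : ENNReal.ofReal p ≠ ∞ := ENNReal.ofReal_ne_top
  set g : Ω → ℝ := μ[fun ω' => |y ω'| ^ p|m] with hgdef
  set f : Ω → ℝ≥0∞ := fun ω => ENNReal.ofReal (g ω) with hfdef
  set G := essSup f μ with hGdef
  -- key identity for the Lp norm of an indicator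
  have hkey : ∀ E : Set Ω, MeasurableSet[m] E →
      eLpNorm (E.indicator y) (ENNReal.ofReal p) μ = (∫⁻ ω in E, f ω ∂μ) ^ (1 / p) := by
    intro E hE
    have hE0 : MeasurableSet[m0] E := hm E hE
    rw [eLpNorm_eq_lintegral_rpow_enorm_toReal hpne0 hpnetop, ENNReal.toReal_ofReal hp0.le]
    congr 1
    calc ∫⁻ ω, (‖E.indicator y ω‖₊ : ℝ≥0∞) ^ p ∂μ
        = ∫⁻ ω, E.indicator (fun ω' => (‖y ω'‖₊ : ℝ≥0∞) ^ p) ω ∂μ := by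
          refine lintegral_congr fun ω => ?_
          by_cases hω : ω ∈ E <;>
            simp [Set.indicator_of_mem, Set.indicator_of_notMem, hω,
              ENNReal.zero_rpow_of_pos hp0]
      _ = ∫⁻ ω in E, (‖y ω‖₊ : ℝ≥0∞) ^ p ∂μ := lintegral_indicator hE0 _
      _ = ∫⁻ ω in E, ENNReal.ofReal (|y ω| ^ p) ∂μ := by
          refine lintegral_congr fun ω => ?_
          rw [← enorm_eq_nnnorm, Real.enorm_eq_ofReal_abs, ENNReal.ofReal_rpow_of_nonneg (abs_nonneg _) hp0.le]
      _ = ENNReal.ofReal (∫ ω in E, |y ω| ^ p ∂μ) :=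
          (ofReal_integral_eq_lintegral_ofReal hyp.restrict
            (ae_restrict_of_ae (Filter.Eventually.of_forall fun ω =>
              Real.rpow_nonneg (abs_nonneg _) p))).symm
      _ = ENNReal.ofReal (∫ ω in E, g ω ∂μ) := by rw [setIntegral_condExp hm hyp hE]
      _ = ∫⁻ ω in E, f ω ∂μ :=
          ofReal_integral_eq_lintegral_ofReal integrable_condExp.restrict
            (ae_restrict_of_ae (condExp_nonneg (Filter.Eventually.of_forall fun ω =>
              Real.rpow_nonneg (abs_nonneg _) p)))
  refine le_antisymm ?_ (sSup_le ?_)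
  · -- `G^(1/p) ≤ sSup`
    refine le_of_forall_lt_imp_le_of_dense fun a ha => ?_
    have hb : a ^ p < G := by
      have h1 := ENNReal.rpow_lt_rpow ha hp0
      rwa [← ENNReal.rpow_mul, one_div_mul_cancel hp0', ENNReal.rpow_one] at h1
    set b : ℝ≥0∞ := a ^ p with hbdef
    have hbtop : b ≠ ∞ := ne_top_of_lt hb
    set c : ℝ := b.toReal with hcdef
    have hbc : ENNReal.ofReal c = b := ENNReal.ofReal_toReal hbtop
    set E : Set Ω := {ω | c < g ω} with hEdef
    have hEm : MeasurableSet[m] E :=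
      measurableSet_lt measurable_const stronglyMeasurable_condExp.measurable
    have hE0 : MeasurableSet[m0] E := hm E hEm
    have hEpos : 0 < μ E := by
      rcases eq_or_ne (μ E) 0 with h0 | h0
      · exfalso
        have hae0 : ∀ᵐ ω ∂μ, ω ∉ E := by
          rw [ae_iff]; simpa using h0
        have hae : ∀ᵐ ω ∂μ, f ω ≤ b := by
          filter_upwards [hae0] with ω hω
          rw [← hbc]
          exact ENNReal.ofReal_le_ofReal (not_lt.1 hω)
        exact absurd (essSup_le_of_ae_le b hae) (not_le.2 hb)
      · exact lt_of_le_of_ne zero_le (Ne.symm h0)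
    have hEne : μ E ≠ 0 := ne_of_gt hEpos
    have hEtop : μ E ≠ ∞ := measure_ne_top μ E
    have h2 : b * μ E ≤ ∫⁻ ω in E, f ω ∂μ := by
      rw [← setLIntegral_const E b]
      refine lintegral_mono_ae ((ae_restrict_iff' hE0).2
        (Filter.Eventually.of_forall fun ω hω => ?_))
      rw [← hbc]
      exact ENNReal.ofReal_le_ofReal (le_of_lt hω)
    refine le_sSup_of_le ⟨E, hEm, hEpos, rfl⟩ ?_
    rw [hkey E hEm]
    calc a = μ E ^ (-(1 / p)) * (b * μ E) ^ (1 / p) := by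
          rw [ENNReal.mul_rpow_of_nonneg _ _ hpinv, mul_comm (b ^ (1 / p)), ← mul_assoc,
            ← ENNReal.rpow_add _ _ hEne hEtop, neg_add_cancel, ENNReal.rpow_zero, one_mul,
            hbdef, ← ENNReal.rpow_mul, mul_one_div_cancel hp0', ENNReal.rpow_one]
      _ ≤ μ E ^ (-(1 / p)) * (∫⁻ ω in E, f ω ∂μ) ^ (1 / p) :=
          mul_le_mul_right (ENNReal.rpow_le_rpow h2 hpinv) _
  · rintro r ⟨E, hEm, hEpos, rfl⟩
    have hE0 : MeasurableSet[m0] E := hm E hEm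
    have hEne : μ E ≠ 0 := ne_of_gt hEpos
    have hEtop : μ E ≠ ∞ := measure_ne_top μ E
    have h1 : ∫⁻ ω in E, f ω ∂μ ≤ G * μ E :=
      calc ∫⁻ ω in E, f ω ∂μ ≤ ∫⁻ _ in E, G ∂μ :=
            lintegral_mono_ae (ae_restrict_of_ae (ENNReal.ae_le_essSup f))
        _ = G * μ E := setLIntegral_const E G
    rw [hkey E hEm]
    calc μ E ^ (-(1 / p)) * (∫⁻ ω in E, f ω ∂μ) ^ (1 / p)
        ≤ μ E ^ (-(1 / p)) * (G * μ E) ^ (1 / p) :=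
          mul_le_mul_right (ENNReal.rpow_le_rpow h1 hpinv) _
      _ = G ^ (1 / p) := by
          rw [ENNReal.mul_rpow_of_nonneg _ _ hpinv, mul_comm (G ^ (1 / p)), ← mul_assoc,
            ← ENNReal.rpow_add _ _ hEne hEtop, neg_add_cancel, ENNReal.rpow_zero, one_mul]
end

section
/- Let $r_1,\dots,r_n$ be the Rademacher functions on $[0,1]$ (or independent $\pm1$ symmetric random variables) and $e_{1k}$ the matrix units in $M_n$ with normalized trace $\mathrm{tr}_n=\frac{1}{n}\mathrm{Tr}$. Set $x=\sum_{k=1}^n r_k\otimes e_{1k}\in L_\infty([0,1])\otimes M_n$. Then for every $0<p<\infty$, $\left(\int_0^1 \mathrm{tr}_n\,|x(t)|^p\,dt\right)^{1/p} = (n)^{1/2}\,n^{-1/p}$, where $|x|=(x^*x)^{1/2}$. In particular, for the martingale with respect to the dyadic filtration tensored with $M_n$ and $m=0$, $\|x-x_0\|_p=n^{1/2-1/p}$, which is unbounded in $n$ for $p>2$. -/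
open MeasureTheory Matrix

lemma sum_eig_eq (n : ℕ) (hn : 0 < n) {Ω : Type*} (r : Fin n → Ω → ℝ)
    (hr : ∀ k ω, r k ω = 1 ∨ r k ω = -1) (p : ℝ) (hp : 0 < p)
    (x : Ω → Matrix (Fin n) (Fin n) ℂ)
    (hx : ∀ ω, x ω = ∑ k, (r k ω : ℂ) • Matrix.single (⟨0, hn⟩ : Fin n) k (1 : ℂ))
    (h : ∀ ω, ((x ω)ᴴ * x ω).IsHermitian) (ω : Ω) :
    (∑ i, ((h ω).eigenvalues i) ^ (p / 2)) = (n : ℝ) ^ (p / 2) := by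
  set A := (x ω)ᴴ * x ω with hA_def
  have hA := h ω
  have hsq : ∀ k, (r k ω : ℂ) * (r k ω : ℂ) = 1 := by
    intro k; rcases hr k ω with h1 | h1 <;> rw [h1] <;> norm_num
  have hentry : ∀ k l, A k l = (r k ω : ℂ) * (r l ω : ℂ) := by
    intro k l
    simp only [hA_def, Matrix.mul_apply, conjTranspose_apply, hx ω]
    simp only [Finset.sum_apply, Matrix.sum_apply, Matrix.smul_apply,
      Matrix.single, Matrix.of_apply, smul_eq_mul, mul_ite, mul_one, mul_zero]
    have key : ∀ j : Fin n,
        (star (∑ k', if (⟨0, hn⟩ : Fin n) = j ∧ k' = k then (r k' ω : ℂ) else 0)) *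
          (∑ k', if (⟨0, hn⟩ : Fin n) = j ∧ k' = l then (r k' ω : ℂ) else 0) =
        if (⟨0, hn⟩ : Fin n) = j then (r k ω : ℂ) * (r l ω : ℂ) else 0 := by
      intro j
      by_cases hj : (⟨0, hn⟩ : Fin n) = j
      · simp [hj, Complex.conj_ofReal]
      · simp [hj]
    simp only [key]
    simp
  -- A * A = n • A
  have hAA : A * A = (n : ℂ) • A := by
    ext k l
    rw [Matrix.mul_apply]
    simp only [hentry, Matrix.smul_apply, smul_eq_mul]
    have key : ∀ j : Fin n, ((r k ω : ℂ) * (r j ω : ℂ)) * ((r j ω : ℂ) * (r l ω : ℂ)) =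
        (r k ω : ℂ) * (r l ω : ℂ) := by
      intro j
      rw [mul_assoc, ← mul_assoc ((r j ω : ℂ)), hsq j, one_mul]
    rw [Finset.sum_congr rfl fun j _ => key j, Finset.sum_const, Finset.card_univ,
      Fintype.card_fin, nsmul_eq_mul]
  -- each eigenvalue is 0 or n
  have hev : ∀ i, hA.eigenvalues i = 0 ∨ hA.eigenvalues i = n := by
    intro i
    set lam := hA.eigenvalues i with hlam
    set v : Fin n → ℂ := ⇑(hA.eigenvectorBasis i) with hv_def
    have hv : A *ᵥ v = lam • v := hA.mulVec_eigenvectorBasis i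
    have hvne : ∃ j, v j ≠ 0 := by
      by_contra hc
      push_neg at hc
      have : hA.eigenvectorBasis i = 0 := by
        ext j
        exact hc j
      exact hA.eigenvectorBasis.orthonormal.ne_zero i this
    obtain ⟨j, hj⟩ := hvne
    have h1 : A *ᵥ (A *ᵥ v) = lam • lam • v := by
      rw [hv, Matrix.mulVec_smul, hv]
    have h2 : A *ᵥ (A *ᵥ v) = (n : ℂ) • lam • v := by
      rw [Matrix.mulVec_mulVec, hAA, Matrix.smul_mulVec, hv]
    have h3 := congrFun (h1.symm.trans h2) j
    simp only [Pi.smul_apply, Complex.real_smul, smul_eq_mul] at h3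
    have h4 : ((lam : ℂ) * lam - (n : ℂ) * lam) * v j = 0 := by linear_combination h3
    rcases mul_eq_zero.mp h4 with h5 | h5
    · have h6 : (lam : ℂ) * lam = (n : ℂ) * lam := by linear_combination h5
      have h7 : lam * lam = (n : ℝ) * lam := by exact_mod_cast h6
      rcases mul_eq_zero.mp (show (lam - n) * lam = 0 by linear_combination h7) with h8 | h8
      · right; linarith [sub_eq_zero.mp h8]
      · left; exact h8
    · exact absurd h5 hj
  -- sum of eigenvalues = n
  have htr : ∑ i, hA.eigenvalues i = n := by
    have t1 : A.trace = (n : ℂ) := by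
      rw [Matrix.trace]
      simp only [Matrix.diag_apply, hentry, hsq]
      simp
    have t2 : A.trace = ∑ i, (hA.eigenvalues i : ℂ) := by
      rw [hA_def]
      conv_lhs => rw [hA.spectral_theorem]
      rw [Unitary.conjStarAlgAut_apply, Matrix.trace_mul_cycle]
      have : (star (hA.eigenvectorUnitary : Matrix (Fin n) (Fin n) ℂ)) *
          (hA.eigenvectorUnitary : Matrix (Fin n) (Fin n) ℂ) = 1 :=
        Matrix.mem_unitaryGroup_iff'.mp hA.eigenvectorUnitary.2
      rw [this, one_mul, Matrix.trace_diagonal]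
      simp
    have : ((∑ i, hA.eigenvalues i : ℝ) : ℂ) = ((n : ℝ) : ℂ) := by
      push_cast
      rw [← t2, t1]
    exact_mod_cast this
  -- conclude
  have hn' : (0:ℝ) < n := Nat.cast_pos.mpr hn
  have hterm : ∀ i, (hA.eigenvalues i) ^ (p / 2) =
      (hA.eigenvalues i / n) * (n : ℝ) ^ (p / 2) := by
    intro i
    rcases hev i with h1 | h1
    · rw [h1, Real.zero_rpow (by positivity : p / 2 ≠ 0), zero_div, zero_mul]
    · rw [h1, div_self hn'.ne', one_mul]
  rw [Finset.sum_congr rfl fun i _ => hterm i, ← Finset.sum_mul, ← Finset.sum_div, htr,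
    div_self hn'.ne', one_mul]

/-- For `x = ∑ r_k ⊗ e_{1k}` with `r_k` ±1-valued (Rademacher) functions,
`(∫ tr_n |x(t)|^p dt)^(1/p) = n^(1/2) n^(-1/p)`, where
`tr_n |x|^p = (1/n) ∑ eigenvalues(x*x)^(p/2)`. -/
theorem stmt9 (n : ℕ) (hn : 0 < n) {Ω : Type*} {mΩ : MeasurableSpace Ω} (μ : Measure Ω)
    [IsProbabilityMeasure μ] (r : Fin n → Ω → ℝ) (hmeas : ∀ k, Measurable (r k))
    (hr : ∀ k ω, r k ω = 1 ∨ r k ω = -1) (p : ℝ) (hp : 0 < p)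
    (x : Ω → Matrix (Fin n) (Fin n) ℂ)
    (hx : ∀ ω, x ω = ∑ k, (r k ω : ℂ) • Matrix.single (⟨0, hn⟩ : Fin n) k (1 : ℂ))
    (h : ∀ ω, ((x ω)ᴴ * x ω).IsHermitian) :
    (∫ ω, (∑ i, ((h ω).eigenvalues i) ^ (p / 2)) / n ∂μ) ^ (1 / p) =
      (n : ℝ) ^ ((1 : ℝ) / 2) * (n : ℝ) ^ (-(1 / p)) := by
  have hn' : (0:ℝ) < n := Nat.cast_pos.mpr hn
  have key : ∀ ω, (∑ i, ((h ω).eigenvalues i) ^ (p / 2)) / n = (n:ℝ) ^ (p/2 - 1) := by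
    intro ω
    rw [sum_eig_eq n hn r hr p hp x hx h ω, Real.rpow_sub hn', Real.rpow_one]
  simp only [key]
  rw [integral_const, probReal_univ, one_smul,
    ← Real.rpow_mul hn'.le, ← Real.rpow_add hn']
  congr 1
  field_simp
  ring
end
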